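/- Let M = [[A₊, F],[F*, A₋]] be a 2×2 block operator on 𝓗₊ ⊕ 𝓗₋ where A₊ is uniformly accretive (Re⟨A₊ψ,ψ⟩ ≥ c‖ψ‖² for some c > 0) and A₋ is uniformly dissipative (Re⟨A₋ψ,ψ⟩ ≤ −c‖ψ‖²), with A₊, A₋, F bounded. Then M is invertible in B(𝓗₊ ⊕ 𝓗₋). -/

import Mathlib

open ContinuousLinearMap
open scoped InnerProductSpace

/-- The 2×2 block operator `[[A, B],[C, D]]` on `Hp × Hm`. -/
noncomputable def block {Hp Hm : Type*}
    [NormedAddCommGroup Hp] [InnerProductSpace ℂ Hp] [CompleteSpace Hp]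
    [NormedAddCommGroup Hm] [InnerProductSpace ℂ Hm] [CompleteSpace Hm]
    (A : Hp →L[ℂ] Hp) (B : Hm →L[ℂ] Hp) (C : Hp →L[ℂ] Hm) (D : Hm →L[ℂ] Hm) :
    (Hp × Hm) →L[ℂ] (Hp × Hm) :=
  (A.comp (ContinuousLinearMap.fst ℂ Hp Hm) + B.comp (ContinuousLinearMap.snd ℂ Hp Hm)).prod
    (C.comp (ContinuousLinearMap.fst ℂ Hp Hm) + D.comp (ContinuousLinearMap.snd ℂ Hp Hm))

/-- A uniformly accretive bounded operator on a complex Hilbert space is invertible. -/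
lemma isUnit_of_accretive {H : Type*} [NormedAddCommGroup H] [InnerProductSpace ℂ H]
    [CompleteSpace H] (T : H →L[ℂ] H) (c : ℝ) (hc : 0 < c)
    (h : ∀ x, c * ‖x‖ ^ 2 ≤ (⟪T x, x⟫_ℂ).re) : IsUnit T := by
  have hbound : ∀ x, ‖x‖ ≤ c⁻¹ * ‖T x‖ := by
    intro x
    rcases eq_or_ne x 0 with rfl | hx
    · simp
    · have h1 : c * ‖x‖ ^ 2 ≤ ‖T x‖ * ‖x‖ := by
        calc c * ‖x‖ ^ 2 ≤ (⟪T x, x⟫_ℂ).re := h x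
        _ ≤ ‖⟪T x, x⟫_ℂ‖ := Complex.re_le_norm _
        _ ≤ ‖T x‖ * ‖x‖ := norm_inner_le_norm _ _
      have hxpos : 0 < ‖x‖ := norm_pos_iff.mpr hx
      rw [le_inv_mul_iff₀ hc]
      nlinarith
  have hanti : AntilipschitzWith ⟨c⁻¹, by positivity⟩ T :=
    T.antilipschitz_of_bound hbound
  have hinj : LinearMap.ker (T : H →ₗ[ℂ] H) = ⊥ := (LinearMap.ker_eq_bot (f := (T : H →ₗ[ℂ] H))).mpr hanti.injective
  have hclosed : IsClosed (LinearMap.range (T : H →ₗ[ℂ] H) : Set H) := by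
    have : IsClosed (Set.range T) := hanti.isClosed_range T.uniformContinuous
    exact this
  have hsurj : LinearMap.range (T : H →ₗ[ℂ] H) = ⊤ := by
    haveI : CompleteSpace (LinearMap.range (T : H →ₗ[ℂ] H)) := hclosed.completeSpace_coe
    rw [← Submodule.orthogonal_eq_bot_iff]
    rw [Submodule.eq_bot_iff]
    intro y hy
    have h0 : ⟪T y, y⟫_ℂ = 0 := hy (T y) (LinearMap.mem_range_self _ y)
    have := h y
    rw [h0] at this
    simp at this
    by_contra hne
    have hp : 0 < ‖y‖ := norm_pos_iff.mpr hne
    nlinarith [mul_pos hc (mul_pos hp hp)]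
  refine ⟨⟨T, (ContinuousLinearEquiv.ofBijective T hinj hsurj).symm.toContinuousLinearMap,
    ?_, ?_⟩, rfl⟩
  · ext x
    simpa using ContinuousLinearEquiv.ofBijective_apply_symm_apply T hinj hsurj x
  · ext x
    simpa using ContinuousLinearEquiv.ofBijective_symm_apply_apply T hinj hsurj x

lemma block_apply {Hp Hm : Type*}
    [NormedAddCommGroup Hp] [InnerProductSpace ℂ Hp] [CompleteSpace Hp]
    [NormedAddCommGroup Hm] [InnerProductSpace ℂ Hm] [CompleteSpace Hm]
    (A : Hp →L[ℂ] Hp) (B : Hm →L[ℂ] Hp) (C : Hp →L[ℂ] Hm) (D : Hm →L[ℂ] Hm)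
    (x : Hp × Hm) : block A B C D x = (A x.1 + B x.2, C x.1 + D x.2) := rfl

lemma block_mul {Hp Hm : Type*}
    [NormedAddCommGroup Hp] [InnerProductSpace ℂ Hp] [CompleteSpace Hp]
    [NormedAddCommGroup Hm] [InnerProductSpace ℂ Hm] [CompleteSpace Hm]
    (A A' : Hp →L[ℂ] Hp) (B B' : Hm →L[ℂ] Hp) (C C' : Hp →L[ℂ] Hm)
    (D D' : Hm →L[ℂ] Hm) :
    block A B C D * block A' B' C' D' =
      block (A * A' + B.comp C') (A.comp B' + B.comp D') (C.comp A' + D.comp C')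
        (C.comp B' + D * D') := by
  ext x <;> simp [block_apply, Prod.ext_iff, mul_apply] <;> abel

lemma block_one {Hp Hm : Type*}
    [NormedAddCommGroup Hp] [InnerProductSpace ℂ Hp] [CompleteSpace Hp]
    [NormedAddCommGroup Hm] [InnerProductSpace ℂ Hm] [CompleteSpace Hm] :
    (block 1 0 0 1 : (Hp × Hm) →L[ℂ] (Hp × Hm)) = 1 := by
  ext x <;> simp [block_apply]

/-- Invertibility of `M = [[A₊, F],[F*, A₋]]` with `A₊` uniformly accretive and `A₋`
uniformly dissipative (used in the proof of Theorem 2.12). -/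
theorem stmt_18 {Hp Hm : Type*}
    [NormedAddCommGroup Hp] [InnerProductSpace ℂ Hp] [CompleteSpace Hp]
    [NormedAddCommGroup Hm] [InnerProductSpace ℂ Hm] [CompleteSpace Hm]
    (Ap : Hp →L[ℂ] Hp) (Am : Hm →L[ℂ] Hm) (F : Hm →L[ℂ] Hp)
    (c : ℝ) (hc : 0 < c)
    (hAp : ∀ x : Hp, c * ‖x‖ ^ 2 ≤ (⟪Ap x, x⟫_ℂ).re)
    (hAm : ∀ x : Hm, (⟪Am x, x⟫_ℂ).re ≤ -(c * ‖x‖ ^ 2)) :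
    IsUnit (block Ap F (adjoint F) Am) := by
  -- A₊ is invertible
  obtain ⟨u, hu⟩ := isUnit_of_accretive Ap c hc hAp
  set Api : Hp →L[ℂ] Hp := ↑u⁻¹ with hApi_def
  have huA : Ap * Api = 1 := by rw [← hu]; exact u.mul_inv
  have hAu : Api * Ap = 1 := by rw [← hu]; exact u.inv_mul
  have hAA : ∀ y : Hp, Ap (Api y) = y := by
    intro y
    have := congrArg (fun f : Hp →L[ℂ] Hp => f y) huA
    simpa [mul_apply] using this
  have hAA' : ∀ y : Hp, Api (Ap y) = y := by
    intro y
    have := congrArg (fun f : Hp →L[ℂ] Hp => f y) hAu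
    simpa [mul_apply] using this
  -- the inverse of an accretive operator has nonnegative real part
  have hApi_pos : ∀ y : Hp, 0 ≤ (⟪Api y, y⟫_ℂ).re := by
    intro y
    have h1 : ⟪Ap (Api y), Api y⟫_ℂ = (starRingEnd ℂ) ⟪Api y, y⟫_ℂ := by
      rw [← inner_conj_symm, hAA]
    have h2 := hAp (Api y)
    rw [h1, Complex.conj_re] at h2
    nlinarith [sq_nonneg ‖Api y‖, norm_nonneg (Api y)]
  -- the Schur complement
  set S : Hm →L[ℂ] Hm := Am - (adjoint F).comp (Api.comp F) with hS_def
  have hSneg : ∀ x : Hm, c * ‖x‖ ^ 2 ≤ (⟪(-S) x, x⟫_ℂ).re := by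
    intro x
    have h1 : (⟪(-S) x, x⟫_ℂ).re
        = -(⟪Am x, x⟫_ℂ).re + (⟪(adjoint F) (Api (F x)), x⟫_ℂ).re := by
      simp [hS_def, inner_sub_left]
      ring
    rw [h1, adjoint_inner_left]
    have h2 := hAm x
    have h3 := hApi_pos (F x)
    linarith
  have hSunit : IsUnit S := by
    have := (isUnit_of_accretive (-S) c hc hSneg).neg
    simpa using this
  obtain ⟨v, hv⟩ := hSunit
  set Si : Hm →L[ℂ] Hm := ↑v⁻¹ with hSi_def
  have hSS : ∀ y : Hm, S (Si y) = y := by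
    intro y
    have h := congrArg (fun f : Hm →L[ℂ] Hm => f y) v.mul_inv
    simpa [hv, mul_apply] using h
  have hSS' : ∀ y : Hm, Si (S y) = y := by
    intro y
    have h := congrArg (fun f : Hm →L[ℂ] Hm => f y) v.inv_mul
    simpa [hv, mul_apply] using h
  -- the factors of the Schur decomposition
  set G : Hp →L[ℂ] Hm := (adjoint F).comp Api with hG_def
  set L : (Hp × Hm) →L[ℂ] (Hp × Hm) := block 1 0 G 1 with hL_def
  set Dg : (Hp × Hm) →L[ℂ] (Hp × Hm) := block Ap 0 0 S with hDg_def
  set U : (Hp × Hm) →L[ℂ] (Hp × Hm) := block 1 (Api.comp F) 0 1 with hU_def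
  have hfact : block Ap F (adjoint F) Am = L * Dg * U := by
    ext x <;>
      simp [hL_def, hDg_def, hU_def, hG_def, hS_def, block_apply, mul_apply,
        Prod.ext_iff, map_add, hAA, hAA'] <;> abel
  rw [hfact]
  have hLunit : IsUnit L := by
    refine ⟨⟨L, block 1 0 (-G) 1, ?_, ?_⟩, rfl⟩ <;>
      · ext x <;> simp [hL_def, block_apply, mul_apply, Prod.ext_iff]
  have hUunit : IsUnit U := by
    refine ⟨⟨U, block 1 (-(Api.comp F)) 0 1, ?_, ?_⟩, rfl⟩ <;>
      · ext x <;> simp [hU_def, block_apply, mul_apply, Prod.ext_iff]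
  have hDgunit : IsUnit Dg := by
    refine ⟨⟨Dg, block Api 0 0 Si, ?_, ?_⟩, rfl⟩ <;>
      · ext x <;> simp [hDg_def, block_apply, mul_apply, Prod.ext_iff, hAA, hAA', hSS, hSS']
  exact (hLunit.mul hDgunit).mul hUunit
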